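/- Let (A, Con, |~) be a cumulative nonmonotonic system. For finite consistent sets P, Q ∈ Con, if Q ⊆ P ⊆ Q̃, then P̃ = Q̃, where X̃ := {t ∈ A | X |~ {t}}. -/

import Mathlib

/-- X̃ := {t ∈ A | X |~ {t}}. -/
def Tilde {α : Type*} (snake : Set α → Set α → Prop) (X : Set α) : Set α :=
  {t | snake X {t}}

/-- in a cumulative nonmonotonic system, if Q ⊆ P ⊆ Q̃ for finite
consistent sets P, Q, then P̃ = Q̃. -/
theorem tilde_stable {α : Type*} (Con : Set α → Prop)
    (snake : Set α → Set α → Prop)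
    -- Con is a collection of finite subsets of A
    (hCfin : ∀ X : Set α, Con X → X.Finite)
    -- |~ is a relation between members of Con
    (hSnakeCon : ∀ X Y : Set α, snake X Y → Con X ∧ Con Y)
    (h1 : ∀ X Y : Set α, X ⊆ Y → Con Y → Con X)
    (h2 : ∀ a : α, Con {a})
    (h3 : ∀ X T : Set α, snake X T → Con (X ∪ T))
    (h4 : ∀ X Y : Set α, Y ⊆ X → Con X → snake X Y)
    (h5 : ∀ X T Y : Set α, snake X T → snake (X ∪ T) Y → snake X Y)
    (h6 : ∀ X Y Z : Set α, snake X Y → snake X Z → snake X (Y ∪ Z))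
    -- cautious monotony
    (hcm : ∀ (X : Set α) (a b : α), snake X {a} → snake X {b} → snake (X ∪ {a}) {b}) :
    ∀ P Q : Set α, Con P → Con Q → Q ⊆ P → P ⊆ Tilde snake Q →
      Tilde snake P = Tilde snake Q := by
  intro P Q hP hQ hQP hPQ
  have hPfin : P.Finite := hCfin P hP
  -- every element of P is derivable from Q
  have hQa : ∀ a ∈ P, snake Q {a} := fun a ha => hPQ ha
  -- Q |~ S for any finite S ⊆ P
  have hQS : ∀ S : Set α, S.Finite → S ⊆ P → snake Q S := by
    intro S hSfin
    refine Set.Finite.induction_on (motive := fun S _ => S ⊆ P → snake Q S) S hSfin ?_ ?_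
    · intro _; exact h4 Q ∅ (Set.empty_subset Q) hQ
    · intro a S ha hf ih hsub
      have h1' : snake Q {a} := hQa a (hsub (Set.mem_insert a S))
      have h2' : snake Q S := ih (fun x hx => hsub (Set.mem_insert_of_mem a hx))
      have := h6 Q {a} S h1' h2'
      rw [Set.insert_eq]; exact this
  have hQP' : snake Q P := hQS P hPfin (le_refl P)
  have hQunion : Q ∪ P = P := Set.union_eq_self_of_subset_left hQP
  -- Q∪S preserves consequences, for S ⊆ P finite
  have hmono : ∀ S : Set α, S.Finite → S ⊆ P → ∀ t, snake Q {t} → snake (Q ∪ S) {t} := by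
    intro S hSfin
    refine Set.Finite.induction_on
      (motive := fun S _ => S ⊆ P → ∀ t, snake Q {t} → snake (Q ∪ S) {t}) S hSfin ?_ ?_
    · intro _ t ht; simpa using ht
    · intro a S ha hf ih hsub t ht
      have hsub' : S ⊆ P := fun x hx => hsub (Set.mem_insert_of_mem a hx)
      have hQSt : snake (Q ∪ S) {t} := ih hsub' t ht
      have hQSa : snake (Q ∪ S) {a} :=
        ih hsub' a (hQa a (hsub (Set.mem_insert a S)))
      have := hcm (Q ∪ S) a t hQSa hQSt
      have heq : Q ∪ S ∪ {a} = Q ∪ insert a S := by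
        rw [Set.union_assoc, Set.union_comm S {a}, ← Set.insert_eq]
      rwa [heq] at this
  ext t
  simp only [Tilde, Set.mem_setOf_eq]
  constructor
  · intro hPt
    exact h5 Q P {t} hQP' (by rwa [hQunion])
  · intro hQt
    have := hmono P hPfin (le_refl P) t hQt
    rwa [hQunion] at this
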